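/- Let E(θ, f) = ‖(∂_t + w_i∂_i)⟨∇⟩^s f‖²_{L²} − ‖v_i∂_i⟨∇⟩^s f‖²_{L²} + ½‖h⁺_i∂_i⟨∇⟩^s f‖²_{L²} + ½‖h⁻_i∂_i⟨∇⟩^s f‖²_{L²} where θ = ∂_t f, with constant coefficient vectors w, v, h⁺, h⁻ ∈ ℝ² satisfying 2[(h⁺·ξ)² + (h⁻·ξ)²] − 4(v·ξ)² ≥ 4c₀|ξ|² for all ξ. Then there is a constant C depending only on c₀ and the norms of the coefficients such that ‖∂_t f‖²_{H^{s−1/2}} + ‖f‖²_{H^{s+1/2}} ≤ C(E(∂_t f, f) + ‖∂_t f‖²_{L²} + ‖f‖²_{L²}) for all smooth f on 𝕋². -/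

import Mathlib

noncomputable section

/-- `|ξ|²` for a frequency `ξ ∈ ℤ²` -/
def zsq (ξ : Fin 2 → ℤ) : ℝ := ∑ i, ((ξ i : ℝ))^2

/-- Sobolev weight `⟨ξ⟩^{2s} = (1+|ξ|²)^s` -/
def wgt (s : ℝ) (ξ : Fin 2 → ℤ) : ℝ := (1 + zsq ξ) ^ s

def dotz (w : Fin 2 → ℝ) (ξ : Fin 2 → ℤ) : ℝ := ∑ i, w i * (ξ i : ℝ)

/-- squared Sobolev norm `‖f‖²_{H^s}` of a function on `𝕋²` given by its Fourier
coefficients `c` -/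
def sobSq (s : ℝ) (c : (Fin 2 → ℤ) → ℂ) : ℝ := ∑' ξ, wgt s ξ * ‖c ξ‖^2

/-- the `ξ`-th Fourier mode of the energy functional
`E(θ,f) = ‖(∂_t + w·∇)⟨∇⟩^s f‖² − ‖v·∇⟨∇⟩^s f‖² + ½‖h⁺·∇⟨∇⟩^s f‖² + ½‖h⁻·∇⟨∇⟩^s f‖²`,
where `c`, `d` are the Fourier coefficients of `f` and `θ = ∂_t f`. -/
def esum (s : ℝ) (w v hp hm : Fin 2 → ℝ) (c d : (Fin 2 → ℤ) → ℂ)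
    (ξ : Fin 2 → ℤ) : ℝ :=
  wgt s ξ * (‖d ξ + Complex.I * (dotz w ξ) * c ξ‖^2
    - (dotz v ξ)^2 * ‖c ξ‖^2
    + (1/2)*(dotz hp ξ)^2 * ‖c ξ‖^2 + (1/2)*(dotz hm ξ)^2 * ‖c ξ‖^2)

lemma zsq_nonneg (ξ : Fin 2 → ℤ) : 0 ≤ zsq ξ :=
  Finset.sum_nonneg fun _ _ => sq_nonneg _

lemma zsq_cases (ξ : Fin 2 → ℤ) : zsq ξ = 0 ∨ 1 ≤ zsq ξ := by
  by_cases h : ξ 0 = 0 ∧ ξ 1 = 0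
  · left; simp [zsq, Fin.sum_univ_two, h.1, h.2]
  · right
    have h01 : ξ 0 ≠ 0 ∨ ξ 1 ≠ 0 := by tauto
    have h1 : (1 : ℤ) ≤ (ξ 0)^2 + (ξ 1)^2 := by
      rcases h01 with h0 | h1
      · nlinarith [sq_nonneg (ξ 1), Int.one_le_abs h0, sq_abs (ξ 0), abs_nonneg (ξ 0)]
      · nlinarith [sq_nonneg (ξ 0), Int.one_le_abs h1, sq_abs (ξ 1), abs_nonneg (ξ 1)]
    have h2 : (1:ℝ) ≤ ((ξ 0 : ℝ))^2 + ((ξ 1 : ℝ))^2 := by exact_mod_cast h1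
    simpa [zsq, Fin.sum_univ_two] using h2

/-- abstract arithmetic core -/
lemma arith (c₀ W2 q A wm wp P Cn D E : ℝ) (hc : 0 < c₀)
    (hq0 : 0 ≤ q) (hA0 : 0 ≤ A) (hW2 : 0 ≤ W2)
    (hwm : wm ≤ A) (hwm0 : 0 ≤ wm) (hwp : wp ≤ 2*A*q + 1) (hwp0 : 0 ≤ wp)
    (hD2 : D^2 ≤ 2*P^2 + 2*W2*q*Cn^2)
    (hE : A*(P^2 + c₀*q*Cn^2) ≤ E) :
    wm*D^2 + wp*Cn^2 ≤ ((3*c₀ + 2*W2 + 2)/c₀)*(E + D^2 + Cn^2) := by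
  set F := A*(P^2 + c₀*q*Cn^2) with hFdef
  have hF0 : 0 ≤ F := mul_nonneg hA0 (by positivity)
  have h1c : c₀ * (wm * D^2) ≤ (2*c₀ + 2*W2) * F := by
    have s1 : wm * D^2 ≤ A * D^2 := mul_le_mul_of_nonneg_right hwm (sq_nonneg D)
    have s2 : A * D^2 ≤ A * (2*P^2 + 2*W2*q*Cn^2) := mul_le_mul_of_nonneg_left hD2 hA0
    have hbr : c₀ * (2*P^2 + 2*W2*q*Cn^2) ≤ (2*c₀ + 2*W2) * (P^2 + c₀*q*Cn^2) := by
      nlinarith [mul_nonneg hW2 (sq_nonneg P),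
        mul_nonneg (mul_nonneg (mul_nonneg hc.le hc.le) hq0) (sq_nonneg Cn)]
    have s3 : A * (c₀ * (2*P^2 + 2*W2*q*Cn^2)) ≤ A * ((2*c₀ + 2*W2) * (P^2 + c₀*q*Cn^2)) :=
      mul_le_mul_of_nonneg_left hbr hA0
    nlinarith [mul_le_mul_of_nonneg_left s1 hc.le, mul_le_mul_of_nonneg_left s2 hc.le]
  have h2c : c₀ * (wp * Cn^2) ≤ 2 * F + c₀ * Cn^2 := by
    have s1 : wp * Cn^2 ≤ (2*A*q + 1) * Cn^2 := mul_le_mul_of_nonneg_right hwp (sq_nonneg Cn)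
    have s2 : c₀ * (wp * Cn^2) ≤ c₀ * ((2*A*q + 1) * Cn^2) := mul_le_mul_of_nonneg_left s1 hc.le
    have s3 : 0 ≤ A * P^2 := mul_nonneg hA0 (sq_nonneg P)
    nlinarith
  have hK1 : (1:ℝ) ≤ (3*c₀ + 2*W2 + 2)/c₀ := by
    rw [le_div_iff₀ hc]; nlinarith
  have hKpos : (0:ℝ) < (3*c₀ + 2*W2 + 2)/c₀ := lt_of_lt_of_le one_pos hK1
  have hmain : c₀ * (wm * D^2 + wp * Cn^2) ≤ (3*c₀ + 2*W2 + 2) * F + c₀ * Cn^2 := by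
    nlinarith [hF0]
  have hfin : wm * D^2 + wp * Cn^2 ≤ ((3*c₀ + 2*W2 + 2)/c₀) * F + Cn^2 := by
    rw [← mul_le_mul_iff_right₀ hc]
    calc c₀ * (wm * D^2 + wp * Cn^2) ≤ (3*c₀ + 2*W2 + 2) * F + c₀ * Cn^2 := hmain
      _ = c₀ * (((3*c₀ + 2*W2 + 2)/c₀) * F + Cn^2) := by field_simp
  have hEe : ((3*c₀ + 2*W2 + 2)/c₀) * F ≤ ((3*c₀ + 2*W2 + 2)/c₀) * E :=
    mul_le_mul_of_nonneg_left hE hKpos.le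
  nlinarith [mul_nonneg hKpos.le (sq_nonneg D), le_mul_of_one_le_left (sq_nonneg Cn) hK1]

lemma key (s : ℝ) (hs : (1/2 : ℝ) ≤ s) (c₀ : ℝ) (hc : 0 < c₀)
    (w v hp hm : Fin 2 → ℝ)
    (hstab : ∀ ξ : Fin 2 → ℝ,
      4*c₀*(∑ i, (ξ i)^2)
        ≤ 2*((∑ i, hp i * ξ i)^2 + (∑ i, hm i * ξ i)^2) - 4*(∑ i, v i * ξ i)^2)
    (c d : (Fin 2 → ℤ) → ℂ) (ξ : Fin 2 → ℤ) :
    wgt (s - 1/2) ξ * ‖d ξ‖^2 + wgt (s + 1/2) ξ * ‖c ξ‖^2 ≤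
      ((3*c₀ + 2*(∑ i, (w i)^2) + 2)/c₀) *
        (esum s w v hp hm c d ξ + ‖d ξ‖^2 + ‖c ξ‖^2) := by
  have hq0 : 0 ≤ zsq ξ := zsq_nonneg ξ
  have h1q : (1:ℝ) ≤ 1 + zsq ξ := by linarith
  have h1qpos : (0:ℝ) < 1 + zsq ξ := by linarith
  have hA0 : 0 ≤ wgt s ξ := Real.rpow_nonneg h1qpos.le s
  have hW2 : 0 ≤ ∑ i, (w i)^2 := Finset.sum_nonneg fun _ _ => sq_nonneg _
  -- stability at this frequency
  have hkey : c₀ * zsq ξ ≤ (1/2)*(dotz hp ξ)^2 + (1/2)*(dotz hm ξ)^2 - (dotz v ξ)^2 := by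
    have h := hstab (fun i => (ξ i : ℝ))
    simp only [zsq, dotz]
    linarith
  -- Cauchy–Schwarz
  have hm2 : (dotz w ξ)^2 ≤ (∑ i, (w i)^2) * zsq ξ := by
    simp only [dotz, zsq, Fin.sum_univ_two]
    nlinarith [sq_nonneg (w 0 * (ξ 1 : ℝ) - w 1 * (ξ 0 : ℝ))]
  -- lower bound on esum
  have hE : wgt s ξ * (‖d ξ + Complex.I * (dotz w ξ) * c ξ‖^2 + c₀ * zsq ξ * ‖c ξ‖^2)
      ≤ esum s w v hp hm c d ξ := by
    rw [esum]
    refine mul_le_mul_of_nonneg_left ?_ hA0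
    nlinarith [mul_le_mul_of_nonneg_right hkey (sq_nonneg ‖c ξ‖)]
  -- triangle inequality bound for D²
  have hD2 : ‖d ξ‖^2 ≤ 2*‖d ξ + Complex.I * (dotz w ξ) * c ξ‖^2
      + 2*(∑ i, (w i)^2)*zsq ξ*‖c ξ‖^2 := by
    have htri : ‖d ξ‖ ≤ ‖d ξ + Complex.I * (dotz w ξ) * c ξ‖ + |dotz w ξ| * ‖c ξ‖ := by
      have h := norm_sub_le (d ξ + Complex.I * (dotz w ξ) * c ξ) (Complex.I * (dotz w ξ) * c ξ)
      simpa [norm_mul, Complex.norm_real, Real.norm_eq_abs, abs_mul] using h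
    have hmCn : (dotz w ξ)^2 * ‖c ξ‖^2 ≤ (∑ i, (w i)^2) * zsq ξ * ‖c ξ‖^2 :=
      mul_le_mul_of_nonneg_right hm2 (sq_nonneg _)
    nlinarith [sq_nonneg (‖d ξ + Complex.I * (dotz w ξ) * c ξ‖ - |dotz w ξ| * ‖c ξ‖),
      sq_abs (dotz w ξ), norm_nonneg (d ξ), norm_nonneg (d ξ + Complex.I * (dotz w ξ) * c ξ),
      mul_nonneg (abs_nonneg (dotz w ξ)) (norm_nonneg (c ξ))]
  -- weight comparisons
  have hwm : wgt (s - 1/2) ξ ≤ wgt s ξ :=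
    Real.rpow_le_rpow_of_exponent_le h1q (by linarith)
  have hwm0 : 0 ≤ wgt (s - 1/2) ξ := Real.rpow_nonneg h1qpos.le _
  have hwp0 : 0 ≤ wgt (s + 1/2) ξ := Real.rpow_nonneg h1qpos.le _
  have hwp : wgt (s + 1/2) ξ ≤ 2 * wgt s ξ * zsq ξ + 1 := by
    rcases zsq_cases ξ with h0 | h1
    · have : wgt (s + 1/2) ξ = 1 := by rw [wgt, h0]; norm_num
      rw [this]
      nlinarith [mul_nonneg hA0 hq0]
    · have e1 : wgt (s + 1/2) ξ ≤ (1 + zsq ξ)^(s+1) :=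
        Real.rpow_le_rpow_of_exponent_le h1q (by linarith)
      have e2 : (1 + zsq ξ)^(s+1) = wgt s ξ * (1 + zsq ξ) := by
        rw [wgt, Real.rpow_add h1qpos, Real.rpow_one]
      nlinarith [mul_le_mul_of_nonneg_left (by linarith : 1 + zsq ξ ≤ 2 * zsq ξ) hA0]
  exact arith c₀ (∑ i, (w i)^2) (zsq ξ) (wgt s ξ) (wgt (s-1/2) ξ) (wgt (s+1/2) ξ)
    (‖d ξ + Complex.I * (dotz w ξ) * c ξ‖) (‖c ξ‖) (‖d ξ‖) (esum s w v hp hm c d ξ)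
    hc hq0 hA0 hW2 hwm hwm0 hwp hwp0 hD2 hE

lemma wgt_zero (ξ : Fin 2 → ℤ) : wgt 0 ξ = 1 := Real.rpow_zero _

lemma wgt_mono {t u : ℝ} (h : t ≤ u) (ξ : Fin 2 → ℤ) : wgt t ξ ≤ wgt u ξ :=
  Real.rpow_le_rpow_of_exponent_le (by linarith [zsq_nonneg ξ]) h

lemma wgt_nonneg (t : ℝ) (ξ : Fin 2 → ℤ) : 0 ≤ wgt t ξ :=
  Real.rpow_nonneg (by linarith [zsq_nonneg ξ]) t

/-- Coercivity of the energy functional under the stability condition: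
`‖∂_t f‖²_{H^{s−1/2}} + ‖f‖²_{H^{s+1/2}} ≤ C(E(∂_t f, f) + ‖∂_t f‖²_{L²} + ‖f‖²_{L²})`. -/
theorem stmt11 (s : ℝ) (hs : (1/2 : ℝ) ≤ s) (c₀ : ℝ) (hc : 0 < c₀)
    (w v hp hm : Fin 2 → ℝ)
    (hstab : ∀ ξ : Fin 2 → ℝ,
      4*c₀*(∑ i, (ξ i)^2)
        ≤ 2*((∑ i, hp i * ξ i)^2 + (∑ i, hm i * ξ i)^2) - 4*(∑ i, v i * ξ i)^2) :
    ∃ C > 0, ∀ c d : (Fin 2 → ℤ) → ℂ,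
      Summable (fun ξ => wgt (s + 1/2) ξ * ‖c ξ‖^2) →
      Summable (fun ξ => wgt (s - 1/2) ξ * ‖d ξ‖^2) →
      Summable (esum s w v hp hm c d) →
      sobSq (s - 1/2) d + sobSq (s + 1/2) c
        ≤ C * ((∑' ξ, esum s w v hp hm c d ξ) + sobSq 0 d + sobSq 0 c) := by
  have hW2 : 0 ≤ ∑ i, (w i)^2 := Finset.sum_nonneg fun _ _ => sq_nonneg _
  refine ⟨(3*c₀ + 2*(∑ i, (w i)^2) + 2)/c₀, div_pos (by nlinarith) hc, ?_⟩
  intro c d hc1 hd1 he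
  have hd0 : Summable (fun ξ => wgt 0 ξ * ‖d ξ‖^2) := by
    refine Summable.of_nonneg_of_le (fun ξ => mul_nonneg (wgt_nonneg 0 ξ) (sq_nonneg _))
      (fun ξ => mul_le_mul_of_nonneg_right (wgt_mono (by linarith) ξ) (sq_nonneg _)) hd1
  have hc0 : Summable (fun ξ => wgt 0 ξ * ‖c ξ‖^2) := by
    refine Summable.of_nonneg_of_le (fun ξ => mul_nonneg (wgt_nonneg 0 ξ) (sq_nonneg _))
      (fun ξ => mul_le_mul_of_nonneg_right (wgt_mono (by linarith) ξ) (sq_nonneg _)) hc1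
  have hpt : ∀ ξ, wgt (s - 1/2) ξ * ‖d ξ‖^2 + wgt (s + 1/2) ξ * ‖c ξ‖^2 ≤
      ((3*c₀ + 2*(∑ i, (w i)^2) + 2)/c₀) *
        (esum s w v hp hm c d ξ + wgt 0 ξ * ‖d ξ‖^2 + wgt 0 ξ * ‖c ξ‖^2) := by
    intro ξ
    simpa [wgt_zero] using key s hs c₀ hc w v hp hm hstab c d ξ
  calc sobSq (s - 1/2) d + sobSq (s + 1/2) c
      = ∑' ξ, (wgt (s - 1/2) ξ * ‖d ξ‖^2 + wgt (s + 1/2) ξ * ‖c ξ‖^2) :=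
        (hd1.tsum_add hc1).symm
    _ ≤ ∑' ξ, ((3*c₀ + 2*(∑ i, (w i)^2) + 2)/c₀) *
          (esum s w v hp hm c d ξ + wgt 0 ξ * ‖d ξ‖^2 + wgt 0 ξ * ‖c ξ‖^2) :=
        (hd1.add hc1).tsum_le_tsum hpt (((he.add hd0).add hc0).mul_left _)
    _ = ((3*c₀ + 2*(∑ i, (w i)^2) + 2)/c₀) *
          ((∑' ξ, esum s w v hp hm c d ξ) + sobSq 0 d + sobSq 0 c) := by
        rw [tsum_mul_left, (he.add hd0).tsum_add hc0, he.tsum_add hd0]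
        rfl
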